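/- Let θ be a real number and suppose G is θ-super positive. Then for each vertex v of G there exists a vertex u adjacent to v such that mult(θ, G\{u,v}) = 0. -/

import Mathlib

open Polynomial

namespace MatchPoly

variable {V : Type*}

/-- The number of `r`-matchings in `G`: sets of `r` edges, no two sharing a vertex. -/
noncomputable def numMatchings (G : SimpleGraph V) (r : ℕ) : ℕ :=
  Nat.card {M : Finset (Sym2 V) // M.card = r ∧ (M : Set (Sym2 V)) ⊆ G.edgeSet ∧
    (M : Set (Sym2 V)).Pairwise fun e f => ∀ v : V, v ∈ e → v ∉ f}

/-- The matching polynomial `μ(G,x) = ∑ (-1)^r p(G,r) x^(n-2r)`. -/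
noncomputable def matchingPoly (G : SimpleGraph V) : Polynomial ℝ :=
  ∑ r ∈ Finset.range (Nat.card V + 1),
    Polynomial.C ((-1 : ℝ) ^ r * (numMatchings G r : ℝ)) *
      (Polynomial.X : Polynomial ℝ) ^ (Nat.card V - 2 * r)

/-- `mult θ G`: the multiplicity of `θ` as a root of `μ(G,x)`. -/
noncomputable def mult (θ : ℝ) (G : SimpleGraph V) : ℕ :=
  (matchingPoly G).rootMultiplicity θ

/-- `G \ X`: the induced subgraph on the complement of the vertex set `X`. -/
def deleteSet (G : SimpleGraph V) (X : Set V) : SimpleGraph ↥(Xᶜ) :=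
  G.induce (Xᶜ)

/-- `G \ v`: delete a single vertex. -/
def deleteVert (G : SimpleGraph V) (v : V) : SimpleGraph ↥({v}ᶜ : Set V) :=
  G.induce ({v}ᶜ : Set V)

/-- `u` is θ-essential: `mult(θ, G\u) = mult(θ,G) - 1`. -/
def IsEssential (θ : ℝ) (G : SimpleGraph V) (u : V) : Prop :=
  mult θ (deleteVert G u) + 1 = mult θ G

/-- `u` is θ-neutral: `mult(θ, G\u) = mult(θ,G)`. -/
def IsNeutral (θ : ℝ) (G : SimpleGraph V) (u : V) : Prop :=
  mult θ (deleteVert G u) = mult θ G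

/-- `u` is θ-positive: `mult(θ, G\u) = mult(θ,G) + 1`. -/
def IsPositive (θ : ℝ) (G : SimpleGraph V) (u : V) : Prop :=
  mult θ (deleteVert G u) = mult θ G + 1

/-- `u` is θ-special: not θ-essential but adjacent to a θ-essential vertex. -/
def IsSpecial (θ : ℝ) (G : SimpleGraph V) (u : V) : Prop :=
  ¬ IsEssential θ G u ∧ ∃ w : V, G.Adj u w ∧ IsEssential θ G w

/-- `A_θ(G)`: the set of θ-special vertices. -/
def specialSet (θ : ℝ) (G : SimpleGraph V) : Set V := {u | IsSpecial θ G u}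

/-- `N_θ(G)`: the set of θ-neutral vertices. -/
def neutralSet (θ : ℝ) (G : SimpleGraph V) : Set V := {u | IsNeutral θ G u}

/-- `P_θ(G)`: the set of θ-positive vertices that are not θ-special. -/
def positiveSet (θ : ℝ) (G : SimpleGraph V) : Set V :=
  {u | IsPositive θ G u ∧ ¬ IsSpecial θ G u}

/-- `G` is θ-super positive: `mult(θ,G) = 0` and `mult(θ,G\v) = 1` for every vertex `v`. -/
def IsSuperPositive (θ : ℝ) (G : SimpleGraph V) : Prop :=
  mult θ G = 0 ∧ ∀ v : V, mult θ (deleteVert G v) = 1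

/-- `G` is θ-elementary: θ-super positive and `P_θ(G\v) = ∅` for every vertex `v`. -/
def IsElementary (θ : ℝ) (G : SimpleGraph V) : Prop :=
  IsSuperPositive θ G ∧ ∀ v : V, positiveSet θ (deleteVert G v) = ∅

/-- `G` is θ-critical: every vertex is θ-essential and `mult(θ,G) = 1`. -/
def IsCritical (θ : ℝ) (G : SimpleGraph V) : Prop :=
  (∀ v : V, IsEssential θ G v) ∧ mult θ G = 1

/-- `c_θ(G)`: the number of θ-critical connected components of `G`. -/
noncomputable def numCritComponents (θ : ℝ) (G : SimpleGraph V) : ℕ :=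
  Nat.card {c : G.ConnectedComponent // IsCritical θ (G.induce c.supp)}

/-- `X` is a θ-barrier set: `mult(θ,G) = c_θ(G\X) - |X|`. -/
def IsBarrier (θ : ℝ) (G : SimpleGraph V) (X : Set V) : Prop :=
  numCritComponents θ (deleteSet G X) = mult θ G + X.ncard

/-- `X` is a θ-extreme set: `mult(θ,G\X) = mult(θ,G) + |X|`. -/
def IsExtreme (θ : ℝ) (G : SimpleGraph V) (X : Set V) : Prop :=
  mult θ (deleteSet G X) = mult θ G + X.ncard

/-- `G` is θ-base: θ-super positive and no θ-barrier set contains two adjacent vertices. -/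
def IsBase (θ : ℝ) (G : SimpleGraph V) : Prop :=
  IsSuperPositive θ G ∧
    ∀ X : Set V, IsBarrier θ G X → ∀ u v : V, u ∈ X → v ∈ X → ¬ G.Adj u v

section Auxiliary

open Finset

/-- matching predicate (bundles the two conditions in `numMatchings`) -/
def IsMat (G : SimpleGraph V) (M : Finset (Sym2 V)) : Prop :=
  (M : Set (Sym2 V)) ⊆ G.edgeSet ∧
  (M : Set (Sym2 V)).Pairwise fun e f => ∀ v : V, v ∈ e → v ∉ f

noncomputable def nm (G : SimpleGraph V) (r : ℕ) : ℕ :=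
  Nat.card {M : Finset (Sym2 V) // M.card = r ∧ IsMat G M}

lemma nm_eq_numMatchings (G : SimpleGraph V) (r : ℕ) : nm G r = numMatchings G r := rfl

lemma edgeSet_induce_iff (G : SimpleGraph V) (s : Set V) (e : Sym2 s) :
    e ∈ (G.induce s).edgeSet ↔ e.map Subtype.val ∈ G.edgeSet := by
  induction e with
  | _ x y => exact Iff.rfl

-- transfer lemma

lemma nm_induce (G : SimpleGraph V) (s : Set V) (r : ℕ) :
    nm (G.induce s) r =
    Nat.card {M : Finset (Sym2 V) // M.card = r ∧ IsMat G M ∧ ∀ e ∈ M, ∀ x ∈ e, x ∈ s} := by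
  classical
  apply Nat.card_congr
  have hinj : Function.Injective (Sym2.map (Subtype.val : s → V)) :=
    Sym2.map.injective Subtype.val_injective
  refine Equiv.ofBijective
    (fun M => ⟨(M : Finset (Sym2 s)).image (Sym2.map Subtype.val), ?_, ⟨?_, ?_⟩, ?_⟩) ⟨?_, ?_⟩
  · rw [Finset.card_image_of_injective _ hinj]; exact M.2.1
  · intro e he
    simp only [Finset.coe_image, Set.mem_image, Finset.mem_coe] at he
    obtain ⟨e', he', rfl⟩ := he
    exact (edgeSet_induce_iff G s e').mp (M.2.2.1 he')
  · intro e he f hf hef x hxe hxf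
    simp only [Finset.coe_image, Set.mem_image, Finset.mem_coe] at he hf
    obtain ⟨e', he', rfl⟩ := he
    obtain ⟨f', hf', rfl⟩ := hf
    rw [Sym2.mem_map] at hxe hxf
    obtain ⟨a, ha, rfl⟩ := hxe
    obtain ⟨b, hb, hba⟩ := hxf
    have hab : a = b := Subtype.val_injective hba.symm
    exact M.2.2.2 he' hf' (fun h => hef (by rw [h])) a ha (hab ▸ hb)
  · intro e he x hxe
    simp only [Finset.mem_image] at he
    obtain ⟨e', _, rfl⟩ := he
    rw [Sym2.mem_map] at hxe
    obtain ⟨a, _, rfl⟩ := hxe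
    exact a.2
  · intro M N h
    apply Subtype.ext
    have := congrArg Subtype.val h
    simpa using Finset.image_injective hinj (by simpa using this)
  · rintro ⟨M, hcard, hmat, hsupp⟩
    have hInjOn : Set.InjOn (fun e : {x // x ∈ M} =>
        Sym2.attachWith e.1 (fun a ha => hsupp e.1 e.2 a ha)) ↑M.attach := by
      intro e _ f _ hef
      have h2 : (Sym2.attachWith e.1 (fun a ha => hsupp e.1 e.2 a ha)).map Subtype.val =
          (Sym2.attachWith f.1 (fun a ha => hsupp f.1 f.2 a ha)).map Subtype.val :=
        congrArg (Sym2.map Subtype.val) hef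
      rw [Sym2.attachWith_map_subtypeVal, Sym2.attachWith_map_subtypeVal] at h2
      exact Subtype.ext h2
    refine ⟨⟨M.attach.image (fun e => Sym2.attachWith e.1 (fun a ha => hsupp e.1 e.2 a ha)),
      ?_, ?_, ?_⟩, ?_⟩
    · rw [Finset.card_image_of_injOn hInjOn, Finset.card_attach]; exact hcard
    · intro e he
      simp only [Finset.coe_image, Set.mem_image, Finset.mem_coe, Finset.mem_attach] at he
      obtain ⟨e', -, rfl⟩ := he
      rw [edgeSet_induce_iff, Sym2.attachWith_map_subtypeVal]
      exact hmat.1 e'.2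
    · intro e he f hf hef x hxe hxf
      simp only [Finset.coe_image, Set.mem_image, Finset.mem_coe, Finset.mem_attach] at he hf
      obtain ⟨e', -, rfl⟩ := he
      obtain ⟨f', -, rfl⟩ := hf
      have hne : e'.1 ≠ f'.1 := by
        intro h
        have h' : e' = f' := Subtype.ext h
        exact hef (by rw [h'])
      have hxe' : (x : V) ∈ e'.1 := by
        have h3 := Sym2.mem_map (f := (Subtype.val : s → V)) (b := (x : V))
          (z := Sym2.attachWith e'.1 (fun a ha => hsupp e'.1 e'.2 a ha))
        rw [Sym2.attachWith_map_subtypeVal] at h3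
        exact h3.mpr ⟨x, hxe, rfl⟩
      have hxf' : (x : V) ∈ f'.1 := by
        have h3 := Sym2.mem_map (f := (Subtype.val : s → V)) (b := (x : V))
          (z := Sym2.attachWith f'.1 (fun a ha => hsupp f'.1 f'.2 a ha))
        rw [Sym2.attachWith_map_subtypeVal] at h3
        exact h3.mpr ⟨x, hxf, rfl⟩
      exact hmat.2 e'.2 f'.2 hne x hxe' hxf'
    · apply Subtype.ext
      simp only
      rw [Finset.image_image]
      ext e
      constructor
      · intro he
        rw [Finset.mem_image] at he
        obtain ⟨e', -, rfl⟩ := he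
        simp only [Function.comp]
        rw [Sym2.attachWith_map_subtypeVal]
        exact e'.2
      · intro he
        refine Finset.mem_image.mpr ⟨⟨e, he⟩, Finset.mem_attach _ _, ?_⟩
        simp only [Function.comp]
        rw [Sym2.attachWith_map_subtypeVal]

lemma nm_zero (G : SimpleGraph V) : nm G 0 = 1 := by
  rw [nm, Nat.card_eq_one_iff_unique]
  constructor
  · constructor
    rintro ⟨M, hM, -⟩ ⟨N, hN, -⟩
    apply Subtype.ext
    simp only
    rw [Finset.card_eq_zero] at hM hN
    rw [hM, hN]
  · exact ⟨⟨∅, by simp, by simp [IsMat], by simp [Set.pairwise_empty]⟩⟩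

lemma key_card [Fintype V] [DecidableEq V] (p : Finset (Sym2 V) → Prop) [DecidablePred p] :
    Nat.card {M : Finset (Sym2 V) // p M} = (univ.filter p).card := by
  simp [Nat.card_eq_fintype_card, Fintype.card_subtype]

lemma nm_rec [Fintype V] [DecidableEq V] (G : SimpleGraph V) [DecidableRel G.Adj]
    (v : V) (r : ℕ) :
    nm G (r+1) = nm (G.induce ({v}ᶜ : Set V)) (r+1)
      + ∑ u ∈ G.neighborFinset v, nm (G.induce ({u,v}ᶜ : Set V)) r := by
  classical
  have hG : nm G (r+1) = (univ.filter fun M : Finset (Sym2 V) =>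
      (M.card = r+1 ∧ IsMat G M)).card := key_card _
  rw [hG]
  rw [← Finset.card_filter_add_card_filter_not
    (p := fun M : Finset (Sym2 V) => ∀ e ∈ M, v ∉ e)]
  congr 1
  · -- avoid-v part
    rw [nm_induce, key_card, Finset.filter_filter]
    congr 1
    apply Finset.filter_congr
    intro M _
    constructor
    · rintro ⟨⟨h1, h2⟩, h3⟩
      exact ⟨h1, h2, fun e he x hx hxv => h3 e he ((Set.mem_singleton_iff.mp hxv) ▸ hx)⟩
    · rintro ⟨h1, h2, h3⟩
      exact ⟨⟨h1, h2⟩, fun e he hv => h3 e he v hv rfl⟩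
  · -- covered-v part
    rw [Finset.filter_filter]
    have hset : (univ.filter fun M : Finset (Sym2 V) =>
        (M.card = r+1 ∧ IsMat G M) ∧ ¬ ∀ e ∈ M, v ∉ e) =
        (G.neighborFinset v).biUnion (fun u => univ.filter fun M =>
          (M.card = r+1 ∧ IsMat G M) ∧ s(u,v) ∈ M) := by
      ext M
      simp only [Finset.mem_filter, Finset.mem_univ, true_and, Finset.mem_biUnion]
      constructor
      · rintro ⟨hPM, hnot⟩
        push_neg at hnot
        obtain ⟨e, heM, hve⟩ := hnot
        obtain ⟨u, rfl⟩ := Sym2.mem_iff_exists.mp hve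
        have hadj : G.Adj v u := (SimpleGraph.mem_edgeSet G).mp (hPM.2.1 heM)
        exact ⟨u, (G.mem_neighborFinset v u).mpr hadj, hPM, Sym2.eq_swap ▸ heM⟩
      · rintro ⟨u, hu, hPM, huvM⟩
        refine ⟨hPM, fun h => h s(u,v) huvM ?_⟩
        exact Sym2.mem_mk_right u v
    rw [hset, Finset.card_biUnion]
    · apply Finset.sum_congr rfl
      intro u hu
      have hadj : G.Adj v u := (G.mem_neighborFinset v u).mp hu
      have hne : u ≠ v := fun h => G.irrefl (h ▸ hadj)
      rw [nm_induce, key_card]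
      refine Finset.card_bij'
        (fun (M : Finset (Sym2 V)) _ => M.erase s(u,v))
        (fun (M' : Finset (Sym2 V)) _ => insert s(u,v) M') ?_ ?_ ?_ ?_
      · rintro M hM
        rw [Finset.mem_filter] at hM ⊢
        obtain ⟨-, ⟨hcard, hmat⟩, huvM⟩ := hM
        refine ⟨Finset.mem_univ _, ?_, ⟨?_, ?_⟩, ?_⟩
        · simp [Finset.card_erase_of_mem huvM, hcard]
        · exact fun e he => hmat.1 (Finset.mem_coe.mp (Finset.mem_of_mem_erase
            (Finset.mem_coe.mp he)))
        · refine Set.Pairwise.mono ?_ hmat.2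
          rw [Finset.coe_erase]
          exact Set.diff_subset
        · intro e he x hx
          have heM : e ∈ M := Finset.mem_of_mem_erase he
          have hene : e ≠ s(u,v) := Finset.ne_of_mem_erase he
          have hdisj := hmat.2 (Finset.mem_coe.mpr heM) (Finset.mem_coe.mpr huvM) hene
          intro hxuv
          rcases hxuv with h | h
          · exact hdisj x hx (h ▸ Sym2.mem_mk_left u v)
          · exact hdisj x hx ((Set.mem_singleton_iff.mp h) ▸ Sym2.mem_mk_right u v)
      · rintro M' hM'
        rw [Finset.mem_filter] at hM' ⊢
        obtain ⟨-, hcard, hmat, hsupp⟩ := hM'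
        have huvnot : s(u,v) ∉ M' := by
          intro h
          exact (hsupp _ h u (Sym2.mem_mk_left u v)) (Or.inl rfl)
        refine ⟨Finset.mem_univ _, ⟨⟨?_, ?_, ?_⟩, Finset.mem_insert_self _ _⟩⟩
        · rw [Finset.card_insert_of_notMem huvnot, hcard]
        · rw [Finset.coe_insert]
          rw [Set.insert_subset_iff]
          exact ⟨(SimpleGraph.mem_edgeSet G).mpr (hadj.symm), hmat.1⟩
        · rw [Finset.coe_insert]
          rw [Set.pairwise_insert]
          refine ⟨hmat.2, ?_⟩
          intro e he _
          constructor
          · intro x hx hxe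
            rcases Sym2.mem_iff.mp hx with rfl | rfl
            · exact (hsupp e (Finset.mem_coe.mp he) x hxe) (Or.inl rfl)
            · exact (hsupp e (Finset.mem_coe.mp he) x hxe) (Or.inr rfl)
          · intro x hx hxuv
            rcases Sym2.mem_iff.mp hxuv with rfl | rfl
            · exact (hsupp e (Finset.mem_coe.mp he) x hx) (Or.inl rfl)
            · exact (hsupp e (Finset.mem_coe.mp he) x hx) (Or.inr rfl)
      · rintro M hM
        rw [Finset.mem_filter] at hM
        exact Finset.insert_erase hM.2.2
      · rintro M' hM'
        rw [Finset.mem_filter] at hM'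
        apply Finset.erase_insert
        intro h
        exact (hM'.2.2.2 _ h u (Sym2.mem_mk_left u v)) (Or.inl rfl)
    · -- pairwise disjoint
      intro u hu u' hu' huu'
      rw [Function.onFun, Finset.disjoint_left]
      intro M hM hM'
      rw [Finset.mem_filter] at hM hM'
      have h1 := hM.2.2
      have h2 := hM'.2.2
      have hnee : s(u,v) ≠ s(u',v) := fun h => huu' (Sym2.congr_left.mp h)
      exact hM.2.1.2.2 (Finset.mem_coe.mpr h1) (Finset.mem_coe.mpr h2) hnee v
        (Sym2.mem_mk_right u v) (Sym2.mem_mk_right u' v)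

lemma edge_filter_card [Fintype V] [DecidableEq V] (e : Sym2 V) (hnd : ¬ e.IsDiag) :
    (Finset.univ.filter (· ∈ e)).card = 2 := by
  induction e with
  | _ a b =>
    have hab : a ≠ b := fun hh => hnd (Sym2.mk_isDiag_iff.mpr hh)
    have h1 : Finset.univ.filter (· ∈ s(a,b)) = {a, b} := by
      ext x; simp [Sym2.mem_iff]
    rw [h1, Finset.card_insert_of_notMem (by simp [hab]), Finset.card_singleton]

lemma nmz_nm [Finite V] (H : SimpleGraph V) (r : ℕ) (h : Nat.card V < 2*r) :
    nm H r = 0 := by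
  classical
  have : Fintype V := Fintype.ofFinite V
  rw [nm, Nat.card_eq_zero]
  left
  constructor
  rintro ⟨M, hcard, hsub, hpair⟩
  have hcard2 : ∀ e ∈ M, (Finset.univ.filter (· ∈ e)).card = 2 := by
    intro e he
    exact edge_filter_card e (SimpleGraph.not_isDiag_of_mem_edgeSet H
      (hsub (Finset.mem_coe.mpr he)))
  have hdisj : ∀ x ∈ M, ∀ y ∈ M, x ≠ y →
      Disjoint (Finset.univ.filter (· ∈ x)) (Finset.univ.filter (· ∈ y)) := by
    intro x hx y hy hxy
    rw [Finset.disjoint_left]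
    intro a ha hay
    rw [Finset.mem_filter] at ha hay
    exact hpair (Finset.mem_coe.mpr hx) (Finset.mem_coe.mpr hy) hxy a ha.2 hay.2
  have hbU := Finset.card_biUnion hdisj
  rw [Finset.sum_congr rfl hcard2, Finset.sum_const, hcard] at hbU
  have hle : (M.biUnion fun e => Finset.univ.filter (· ∈ e)).card ≤ Fintype.card V :=
    Finset.card_le_univ _
  rw [Nat.card_eq_fintype_card] at h
  rw [smul_eq_mul] at hbU
  omega

lemma nmz {W : Type*} [Finite W] (H : SimpleGraph W) (r : ℕ) (h : Nat.card W < 2*r) :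
    numMatchings H r = 0 := by
  rw [← nm_eq_numMatchings]; exact nmz_nm H r h

lemma nm0 {W : Type*} (H : SimpleGraph W) : numMatchings H 0 = 1 := by
  rw [← nm_eq_numMatchings]; exact nm_zero H

lemma nm_rec' [Fintype V] [DecidableEq V] (G : SimpleGraph V) [DecidableRel G.Adj]
    (v : V) (r : ℕ) :
    numMatchings G (r+1) = numMatchings (G.induce ({v}ᶜ : Set V)) (r+1)
      + ∑ u ∈ G.neighborFinset v, numMatchings (G.induce ({u,v}ᶜ : Set V)) r := by
  simp only [← nm_eq_numMatchings]
  exact nm_rec G v r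

lemma coeff_card [Finite V] (G : SimpleGraph V) :
    (matchingPoly G).coeff (Nat.card V) = 1 := by
  rw [matchingPoly, Polynomial.finset_sum_coeff]
  rw [Finset.sum_eq_single 0]
  · simp [nm0]
  · intro r _ hr
    rw [Polynomial.coeff_C_mul, Polynomial.coeff_X_pow]
    rcases le_or_gt (2*r) (Nat.card V) with h | h
    · rw [if_neg (by omega)]
      simp
    · rw [nmz G r h]; simp
  · intro h; simp at h

lemma matchingPoly_ne_zero [Finite V] (G : SimpleGraph V) : matchingPoly G ≠ 0 := by
  intro h
  have := coeff_card G
  rw [h] at this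
  simp at this

lemma eval_matchingPoly (G : SimpleGraph V) (θ : ℝ) :
    (matchingPoly G).eval θ =
    ∑ r ∈ Finset.range (Nat.card V + 1),
      (-1:ℝ)^r * (numMatchings G r : ℝ) * θ^(Nat.card V - 2*r) := by
  rw [matchingPoly, Polynomial.eval_finset_sum]
  simp [mul_assoc]

lemma eval_rec [Fintype V] [DecidableEq V] (G : SimpleGraph V) [DecidableRel G.Adj]
    (θ : ℝ) (v : V) :
    (matchingPoly G).eval θ = θ * (matchingPoly (G.induce ({v}ᶜ : Set V))).eval θ
      - ∑ u ∈ G.neighborFinset v, (matchingPoly (G.induce ({u,v}ᶜ : Set V))).eval θ := by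
  classical
  set n := Nat.card V with hn
  have hn1 : 1 ≤ n := by
    have : Nonempty V := ⟨v⟩
    exact Nat.card_pos
  have hvcard : Nat.card ↥({v}ᶜ : Set V) = n - 1 := by
    rw [Nat.card_coe_set_eq, hn, Nat.card_eq_fintype_card]
    rw [Set.ncard_eq_toFinset_card']
    simp [Finset.card_compl]
  have huvcard : ∀ u : V, u ≠ v → Nat.card ↥({u,v}ᶜ : Set V) = n - 2 := by
    intro u hu
    rw [Nat.card_coe_set_eq, hn, Nat.card_eq_fintype_card]
    rw [Set.ncard_eq_toFinset_card']
    rw [Set.toFinset_compl, Finset.card_compl]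
    congr 1
    rw [Set.toFinset_insert, Set.toFinset_singleton]
    rw [Finset.card_insert_of_notMem (by simp [hu]), Finset.card_singleton]
  -- the two sides
  rw [eval_matchingPoly]
  -- LHS transformation
  have hsplit : ∑ r ∈ Finset.range (n + 1),
      (-1:ℝ)^r * (numMatchings G r : ℝ) * θ^(n - 2*r)
      = (∑ s ∈ Finset.range n,
          (-1:ℝ)^(s+1) * (numMatchings G (s+1) : ℝ) * θ^(n - 2*(s+1))) + θ^n := by
    rw [Finset.sum_range_succ']
    simp [nm0]
  rw [hsplit]
  have hrec : ∀ s ∈ Finset.range n,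
      (-1:ℝ)^(s+1) * (numMatchings G (s+1) : ℝ) * θ^(n - 2*(s+1))
      = (-1:ℝ)^(s+1) * (numMatchings (G.induce ({v}ᶜ : Set V)) (s+1) : ℝ) * θ^(n - 2*(s+1))
        + ∑ u ∈ G.neighborFinset v,
          (-1:ℝ)^(s+1) * (numMatchings (G.induce ({u,v}ᶜ : Set V)) s : ℝ) * θ^(n - 2*(s+1)) := by
    intro s _
    rw [nm_rec' G v s]
    push_cast
    rw [mul_add, add_mul, Finset.mul_sum, Finset.sum_mul]
  rw [Finset.sum_congr rfl hrec, Finset.sum_add_distrib, Finset.sum_comm]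
  -- Claim A
  have claimA : θ * (matchingPoly (G.induce ({v}ᶜ : Set V))).eval θ
      = (∑ s ∈ Finset.range n,
          (-1:ℝ)^(s+1) * (numMatchings (G.induce ({v}ᶜ : Set V)) (s+1) : ℝ) * θ^(n - 2*(s+1)))
        + θ^n := by
    rw [eval_matchingPoly, hvcard]
    have hrange : n - 1 + 1 = n := by omega
    rw [hrange, Finset.mul_sum]
    have hterm : ∀ r ∈ Finset.range n,
        θ * ((-1:ℝ)^r * (numMatchings (G.induce ({v}ᶜ : Set V)) r : ℝ) * θ^(n - 1 - 2*r))
        = (-1:ℝ)^r * (numMatchings (G.induce ({v}ᶜ : Set V)) r : ℝ) * θ^(n - 2*r) := by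
      intro r _
      rcases le_or_gt (2*r) (n-1) with h | h
      · have : n - 2*r = (n - 1 - 2*r) + 1 := by omega
        rw [this, pow_succ]
        ring
      · rw [nmz _ r (by rw [hvcard]; omega)]
        simp
    rw [Finset.sum_congr rfl hterm]
    have hn' : n = (n - 1) + 1 := by omega
    rw [hn', Finset.sum_range_succ']
    congr 1
    · rw [Finset.sum_range_succ]
      have hz : numMatchings (G.induce ({v}ᶜ : Set V)) (n - 1 + 1) = 0 := by
        apply nmz
        rw [hvcard]
        omega
      rw [hz]
      simp
    · rw [nm0]
      simp
  -- Claim B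
  have claimB : ∀ u ∈ G.neighborFinset v,
      (∑ s ∈ Finset.range n,
        (-1:ℝ)^(s+1) * (numMatchings (G.induce ({u,v}ᶜ : Set V)) s : ℝ) * θ^(n - 2*(s+1)))
      = - (matchingPoly (G.induce ({u,v}ᶜ : Set V))).eval θ := by
    intro u hu
    have hadj : G.Adj v u := (G.mem_neighborFinset v u).mp hu
    have hne : u ≠ v := fun h => G.irrefl (h ▸ hadj)
    have hn2 : 2 ≤ n := by
      have : Nontrivial V := ⟨⟨u, v, hne⟩⟩
      rw [hn, Nat.card_eq_fintype_card]
      exact Fintype.one_lt_card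
    rw [eval_matchingPoly, huvcard u hne]
    have hrange : n - 2 + 1 = n - 1 := by omega
    rw [hrange]
    have hsum : ∑ s ∈ Finset.range n,
        (-1:ℝ)^(s+1) * (numMatchings (G.induce ({u,v}ᶜ : Set V)) s : ℝ) * θ^(n - 2*(s+1))
        = ∑ s ∈ Finset.range n,
          -((-1:ℝ)^s * (numMatchings (G.induce ({u,v}ᶜ : Set V)) s : ℝ) * θ^(n - 2 - 2*s)) := by
      apply Finset.sum_congr rfl
      intro s _
      have hexp : n - 2*(s+1) = n - 2 - 2*s := by omega
      rw [hexp, pow_succ]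
      ring
    rw [hsum, Finset.sum_neg_distrib]
    congr 1
    have hn' : n = (n - 1) + 1 := by omega
    rw [hn', Finset.sum_range_succ]
    have hz : numMatchings (G.induce ({u,v}ᶜ : Set V)) (n - 1) = 0 := by
      apply nmz
      rw [huvcard u hne]
      omega
    rw [hz]
    simp
  rw [Finset.sum_congr rfl claimB, claimA]
  ring_nf
  simp only [Finset.sum_neg_distrib]
  ring

end Auxiliary

/-- In a θ-super positive graph every vertex v has a neighbour u with mult(θ, G\{u,v}) = 0. -/
theorem stmt_7 {V : Type*} [Fintype V] (θ : ℝ) (G : SimpleGraph V)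
    (h : IsSuperPositive θ G) (v : V) :
    ∃ u : V, G.Adj u v ∧ mult θ (deleteSet G {u, v}) = 0 := by
  classical
  obtain ⟨h0, h1⟩ := h
  have hGne : matchingPoly G ≠ 0 := matchingPoly_ne_zero G
  have hGeval : (matchingPoly G).eval θ ≠ 0 := by
    intro he
    have hpos : 0 < mult θ G := (Polynomial.rootMultiplicity_pos hGne).mpr he
    omega
  have hGveval : (matchingPoly (G.induce ({v}ᶜ : Set V))).eval θ = 0 := by
    have h1v := h1 v
    have hpos : 0 < (matchingPoly (deleteVert G v)).rootMultiplicity θ := by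
      have : mult θ (deleteVert G v) = (matchingPoly (deleteVert G v)).rootMultiplicity θ := rfl
      omega
    exact (Polynomial.rootMultiplicity_pos'.mp hpos).2
  have hrec := eval_rec G θ v
  rw [hGveval, mul_zero, zero_sub] at hrec
  have hsum : (∑ u ∈ G.neighborFinset v,
      (matchingPoly (G.induce ({u,v}ᶜ : Set V))).eval θ) ≠ 0 := by
    intro hs
    rw [hs, neg_zero] at hrec
    exact hGeval hrec
  obtain ⟨u, hu, hune⟩ := Finset.exists_ne_zero_of_sum_ne_zero hsum
  refine ⟨u, ((G.mem_neighborFinset v u).mp hu).symm, ?_⟩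
  exact Polynomial.rootMultiplicity_eq_zero (fun hr => hune hr)

end MatchPoly
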